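/- Let d ≥ 1 be an integer, p > 0, s < d/p − d/2, w < 0 and k > 0. The family ( ω_m^j(p,s,w)^k )_{(j,m) ∈ (ℕ∪{0}) × ℤ^d} is summable if and only if k > max{ −d/w , 2dp/(2d − dp − 2ps) }. -/

import Mathlib

open Real

/-- The weighted Besov wavelet weight `ω_m^j(p,s,w) = 2^{j(s - d/p + d/2)} (1 + 2^{-2j}|m|²)^{w/2}`. -/
noncomputable def besovWeight (d : ℕ) (p s w : ℝ) (j : ℕ) (m : Fin d → ℤ) : ℝ :=
  (2 : ℝ) ^ ((j : ℝ) * (s - (d : ℝ) / p + (d : ℝ) / 2)) *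
    (1 + (2 : ℝ) ^ (-(2 * (j : ℝ))) * ∑ i, ((m i : ℝ)) ^ 2) ^ (w / 2)

namespace BesovAux

/-- One-dimensional summability over ℕ. -/
lemma summable_og {u ε : ℝ} (hu : 1 < 2 * u) (hε : 0 < ε) :
    Summable fun n : ℕ => (1 + ε * (n : ℝ) ^ 2) ^ (-u) := by
  rw [← summable_nat_add_iff 1]
  have h0 : Summable fun n : ℕ => ε ^ (-u) * ((n : ℝ) + 1) ^ (-(2 * u)) := by
    apply Summable.mul_left
    have h1 : Summable fun n : ℕ => 1 / ((n : ℝ) ^ (2 * u)) :=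
      Real.summable_one_div_nat_rpow.2 hu
    have h2 := (summable_nat_add_iff 1).2 h1
    refine h2.congr fun n => ?_
    have : (0:ℝ) < (n : ℝ) + 1 := by positivity
    rw [rpow_neg this.le, one_div]
    push_cast
    ring_nf
  refine Summable.of_nonneg_of_le (fun n => rpow_nonneg (by positivity) _) (fun n => ?_) h0
  have hb : (0:ℝ) < ε * ((n : ℝ) + 1) ^ 2 := by positivity
  have key : (1 + ε * ((n + 1 : ℕ) : ℝ) ^ 2) ^ (-u) ≤ (ε * ((n : ℝ) + 1) ^ 2) ^ (-u) := by
    apply rpow_le_rpow_of_nonpos hb ?_ (by linarith)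
    push_cast
    linarith
  refine key.trans_eq ?_
  rw [Real.mul_rpow hε.le (by positivity)]
  congr 1
  rw [← Real.rpow_natCast ((n : ℝ) + 1) 2, ← Real.rpow_mul (by positivity)]
  norm_num

lemma summable_zg {u ε : ℝ} (hu : 1 < 2 * u) (hε : 0 < ε) :
    Summable fun n : ℤ => (1 + ε * (n : ℝ) ^ 2) ^ (-u) := by
  apply Summable.of_nat_of_neg
  · exact (summable_og hu hε).congr fun n => by push_cast; ring_nf
  · exact (summable_og hu hε).congr fun n => by push_cast; ring_nf

lemma tsum_og_quarter_le {u ε : ℝ} (hu : 1 < 2 * u) (hε : 0 < ε) :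
    (∑' n : ℕ, (1 + ε / 4 * (n : ℝ) ^ 2) ^ (-u)) ≤
      2 * ∑' n : ℕ, (1 + ε * (n : ℝ) ^ 2) ^ (-u) := by
  have hs := summable_og hu hε
  have heq : ∀ k : ℕ, (1 + ε / 4 * ((2 * k : ℕ) : ℝ) ^ 2) ^ (-u)
      = (1 + ε * (k : ℝ) ^ 2) ^ (-u) := by
    intro k; congr 1; push_cast; ring
  have hse : Summable fun k : ℕ => (1 + ε / 4 * ((2 * k : ℕ) : ℝ) ^ 2) ^ (-u) :=
    hs.congr fun k => (heq k).symm
  have hole : ∀ k : ℕ, (1 + ε / 4 * ((2 * k + 1 : ℕ) : ℝ) ^ 2) ^ (-u)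
      ≤ (1 + ε * (k : ℝ) ^ 2) ^ (-u) := by
    intro k
    apply rpow_le_rpow_of_nonpos (by positivity) ?_ (by linarith)
    push_cast
    nlinarith [mul_nonneg hε.le (Nat.cast_nonneg k : (0:ℝ) ≤ (k:ℝ))]
  have hso : Summable fun k : ℕ => (1 + ε / 4 * ((2 * k + 1 : ℕ) : ℝ) ^ 2) ^ (-u) :=
    Summable.of_nonneg_of_le (fun k => rpow_nonneg (by positivity) _) hole hs
  calc (∑' n : ℕ, (1 + ε / 4 * (n : ℝ) ^ 2) ^ (-u))
      = (∑' k : ℕ, (1 + ε / 4 * ((2 * k : ℕ) : ℝ) ^ 2) ^ (-u))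
        + ∑' k : ℕ, (1 + ε / 4 * ((2 * k + 1 : ℕ) : ℝ) ^ 2) ^ (-u) :=
        (tsum_even_add_odd (f := fun n : ℕ => (1 + ε / 4 * (n : ℝ) ^ 2) ^ (-u)) hse hso).symm
    _ ≤ (∑' n : ℕ, (1 + ε * (n : ℝ) ^ 2) ^ (-u))
        + ∑' n : ℕ, (1 + ε * (n : ℝ) ^ 2) ^ (-u) := by
        apply add_le_add
        · exact le_of_eq (tsum_congr heq)
        · exact Summable.tsum_le_tsum hole hso hs
    _ = 2 * ∑' n : ℕ, (1 + ε * (n : ℝ) ^ 2) ^ (-u) := by ring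

lemma tsum_og_pow_le {u : ℝ} (hu : 1 < 2 * u) (j : ℕ) :
    (∑' n : ℕ, (1 + (1/4 : ℝ) ^ j * (n : ℝ) ^ 2) ^ (-u)) ≤
      2 ^ j * ∑' n : ℕ, (1 + 1 * (n : ℝ) ^ 2) ^ (-u) := by
  induction j with
  | zero => norm_num
  | succ j ih =>
    have h4 : ((1/4 : ℝ) ^ (j + 1)) = (1/4 : ℝ) ^ j / 4 := by ring
    have hP0 : (0:ℝ) ≤ ∑' n : ℕ, (1 + 1 * (n : ℝ) ^ 2) ^ (-u) :=
      tsum_nonneg fun n => rpow_nonneg (by positivity) _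
    calc (∑' n : ℕ, (1 + (1/4 : ℝ) ^ (j+1) * (n : ℝ) ^ 2) ^ (-u))
        = ∑' n : ℕ, (1 + (1/4 : ℝ) ^ j / 4 * (n : ℝ) ^ 2) ^ (-u) := by rw [h4]
      _ ≤ 2 * ∑' n : ℕ, (1 + (1/4 : ℝ) ^ j * (n : ℝ) ^ 2) ^ (-u) :=
          tsum_og_quarter_le hu (by positivity)
      _ ≤ 2 * (2 ^ j * ∑' n : ℕ, (1 + 1 * (n : ℝ) ^ 2) ^ (-u)) := by linarith
      _ = 2 ^ (j+1) * ∑' n : ℕ, (1 + 1 * (n : ℝ) ^ 2) ^ (-u) := by ring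

lemma tsum_zg_pow_le {u : ℝ} (hu : 1 < 2 * u) (j : ℕ) :
    (∑' n : ℤ, (1 + (1/4 : ℝ) ^ j * (n : ℝ) ^ 2) ^ (-u)) ≤
      2 ^ (j + 1) * ∑' n : ℕ, (1 + 1 * (n : ℝ) ^ 2) ^ (-u) := by
  have hε : (0:ℝ) < (1/4 : ℝ) ^ j := by positivity
  set ε := (1/4 : ℝ) ^ j with hεdef
  set g : ℕ → ℝ := fun n => (1 + ε * (n : ℝ) ^ 2) ^ (-u) with hgdef
  set f : ℤ → ℝ := fun n => (1 + ε * (n : ℝ) ^ 2) ^ (-u) with hfdef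
  have hs : Summable g := summable_og hu hε
  have hfg : ∀ n : ℕ, f (n : ℤ) = g n := fun n => by simp [hfdef, hgdef]
  have hfg' : ∀ n : ℕ, f (-((n : ℤ) + 1)) = g (n + 1) := by
    intro n
    simp only [hfdef, hgdef]
    congr 2
    push_cast
    ring
  have hs1 : Summable fun n : ℕ => f (n : ℤ) := hs.congr fun n => (hfg n).symm
  have hs2 : Summable fun n : ℕ => f (-((n : ℤ) + 1)) :=
    ((summable_nat_add_iff 1).2 hs).congr fun n => (hfg' n).symm
  have hsplit : (∑' n : ℤ, f n) = (∑' n : ℕ, f (n : ℤ)) + ∑' n : ℕ, f (-((n : ℤ) + 1)) :=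
    tsum_of_nat_of_neg_add_one hs1 hs2
  have hle1 : (∑' n : ℕ, f (n : ℤ)) = ∑' n : ℕ, g n := tsum_congr hfg
  have hle2 : (∑' n : ℕ, f (-((n : ℤ) + 1))) ≤ ∑' n : ℕ, g n := by
    refine Summable.tsum_le_tsum_of_inj (fun n : ℕ => n + 1) (fun a b h => by simpa using h)
      (fun c _ => rpow_nonneg (by positivity) _) (fun n => ?_) hs2 hs
    exact le_of_eq (hfg' n)
  have hP := tsum_og_pow_le hu j
  calc (∑' n : ℤ, (1 + ε * (n : ℝ) ^ 2) ^ (-u))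
      = (∑' n : ℕ, f (n : ℤ)) + ∑' n : ℕ, f (-((n : ℤ) + 1)) := hsplit
    _ ≤ (∑' n : ℕ, g n) + ∑' n : ℕ, g n := add_le_add hle1.le hle2
    _ = 2 * ∑' n : ℕ, (1 + ε * (n : ℝ) ^ 2) ^ (-u) := by rw [hgdef]; ring
    _ ≤ 2 * (2 ^ j * ∑' n : ℕ, (1 + 1 * (n : ℝ) ^ 2) ^ (-u)) := by linarith
    _ = 2 ^ (j + 1) * ∑' n : ℕ, (1 + 1 * (n : ℝ) ^ 2) ^ (-u) := by ring

/-- Splitting off the first coordinate of a tuple. -/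
def splitEquiv (n : ℕ) : (Fin (n + 1) → ℤ) ≃ ℤ × (Fin n → ℤ) where
  toFun m := (m 0, fun i => m i.succ)
  invFun p := Fin.cons p.1 p.2
  left_inv m := Fin.cons_self_tail m
  right_inv p := by ext <;> simp

lemma pi_summable_tsum {g : ℤ → ℝ} (hg0 : ∀ z, 0 ≤ g z) (hg : Summable g) (n : ℕ) :
    Summable (fun m : Fin n → ℤ => ∏ i, g (m i)) ∧
      (∑' m : Fin n → ℤ, ∏ i, g (m i)) = (∑' z, g z) ^ n := by
  induction n with
  | zero =>
    have h1 : ∀ m : Fin 0 → ℤ, (∏ i, g (m i)) = 1 := fun m => by simp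
    have hsum : HasSum (fun m : Fin 0 → ℤ => ∏ i, g (m i)) 1 := by
      have := hasSum_single (f := fun m : Fin 0 → ℤ => ∏ i, g (m i)) default
        (fun b hb => (hb (Subsingleton.elim b default)).elim)
      simp only [h1] at this ⊢; exact this
    exact ⟨hsum.summable, by rw [hsum.tsum_eq, pow_zero]⟩
  | succ n ih =>
    obtain ⟨hsn, htn⟩ := ih
    have hprodnn : ∀ m : Fin n → ℤ, 0 ≤ ∏ i, g (m i) :=
      fun m => Finset.prod_nonneg fun i _ => hg0 _
    obtain ⟨G, hGdef⟩ : ∃ G : ℤ × (Fin n → ℤ) → ℝ,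
        G = fun p => g p.1 * ∏ i, g (p.2 i) := ⟨_, rfl⟩
    have hGs : Summable G := by
      rw [hGdef]
      apply Summable.mul_of_nonneg hg hsn (fun z => hg0 z) (fun m => hprodnn m)
    have hkey : ∀ m : Fin (n + 1) → ℤ,
        (∏ i, g (m i)) = G (splitEquiv n m) := by
      intro m
      rw [hGdef]
      exact Fin.prod_univ_succ _
    constructor
    · have h2 : Summable fun m : Fin (n + 1) → ℤ => G (splitEquiv n m) :=
        (splitEquiv n).summable_iff.2 hGs
      exact h2.congr fun m => (hkey m).symm
    · have habs : Summable fun z : ℤ => ‖g z‖ :=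
        hg.congr fun z => (Real.norm_eq_abs _ ▸ (abs_of_nonneg (hg0 z)).symm)
      have habs2 : Summable fun m : Fin n → ℤ => ‖∏ i, g (m i)‖ :=
        hsn.congr fun m => (Real.norm_eq_abs _ ▸ (abs_of_nonneg (hprodnn m)).symm)
      have hmul : (∑' z, g z) * (∑' m : Fin n → ℤ, ∏ i, g (m i)) = ∑' p, G p := by
        rw [hGdef]
        exact tsum_mul_tsum_of_summable_norm habs habs2
      have htrans : (∑' m : Fin (n + 1) → ℤ, ∏ i, g (m i)) = ∑' p, G p := by
        rw [← (splitEquiv n).tsum_eq G]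
        exact tsum_congr fun m => hkey m
      rw [htrans, ← hmul, htn, pow_succ]
      ring

lemma one_add_sum_rpow_le {d : ℕ} (hd : 1 ≤ d) {t ε : ℝ} (ht : 0 < t) (hε : 0 ≤ ε)
    (m : Fin d → ℤ) :
    (1 + ε * ∑ i, ((m i : ℝ)) ^ 2) ^ (-t) ≤ ∏ i, (1 + ε * ((m i : ℝ)) ^ 2) ^ (-(t / d)) := by
  have hQ : (0:ℝ) ≤ ∑ i, ((m i : ℝ)) ^ 2 := Finset.sum_nonneg fun i _ => sq_nonneg _
  have hX : (0:ℝ) < 1 + ε * ∑ i, ((m i : ℝ)) ^ 2 := by positivity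
  have hfac : ∀ i, (0:ℝ) < 1 + ε * ((m i : ℝ)) ^ 2 := fun i => by positivity
  rw [Real.finset_prod_rpow _ _ (fun i _ => (hfac i).le)]
  have hprod_le : (∏ i, (1 + ε * ((m i : ℝ)) ^ 2)) ≤ (1 + ε * ∑ i, ((m i : ℝ)) ^ 2) ^ (d : ℕ) := by
    calc (∏ i, (1 + ε * ((m i : ℝ)) ^ 2))
        ≤ ∏ _i : Fin d, (1 + ε * ∑ i, ((m i : ℝ)) ^ 2) := by
          refine Finset.prod_le_prod (fun i _ => (hfac i).le) fun i _ => ?_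
          have : ((m i : ℝ)) ^ 2 ≤ ∑ i, ((m i : ℝ)) ^ 2 :=
            Finset.single_le_sum (fun i _ => sq_nonneg ((m i : ℝ))) (Finset.mem_univ i)
          nlinarith
      _ = (1 + ε * ∑ i, ((m i : ℝ)) ^ 2) ^ (d : ℕ) := by
          rw [Finset.prod_const, Finset.card_univ, Fintype.card_fin]
  have h2 : (1 + ε * ∑ i, ((m i : ℝ)) ^ 2) ^ (-t)
      = ((1 + ε * ∑ i, ((m i : ℝ)) ^ 2) ^ (d : ℕ)) ^ (-(t / d)) := by
    rw [← Real.rpow_natCast (1 + ε * ∑ i, ((m i : ℝ)) ^ 2) d, ← Real.rpow_mul hX.le]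
    congr 1
    have hd0 : (d : ℝ) ≠ 0 := by positivity
    field_simp
  rw [h2]
  have hdpos : (0:ℝ) < d := by positivity
  exact Real.rpow_le_rpow_of_nonpos (Finset.prod_pos fun i _ => hfac i) hprod_le
    (neg_nonpos.2 (div_nonneg ht.le hdpos.le))

lemma le_tsum_box {d : ℕ} {t ε : ℝ} (ht : 0 ≤ t) (hε : 0 ≤ ε) (N : ℕ)
    (hs : Summable fun m : Fin d → ℤ => (1 + ε * ∑ i, ((m i : ℝ)) ^ 2) ^ (-t)) :
    ((2 * N + 1 : ℕ) : ℝ) ^ d * (1 + ε * ((d : ℝ) * (N : ℝ) ^ 2)) ^ (-t) ≤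
      ∑' m : Fin d → ℤ, (1 + ε * ∑ i, ((m i : ℝ)) ^ 2) ^ (-t) := by
  classical
  set B : Finset (Fin d → ℤ) :=
    Fintype.piFinset fun _ : Fin d => Finset.Icc (-(N : ℤ)) (N : ℤ) with hBdef
  have hcard : B.card = (2 * N + 1) ^ d := by
    rw [hBdef, Fintype.card_piFinset]
    have : (Finset.Icc (-(N : ℤ)) (N : ℤ)).card = 2 * N + 1 := by
      rw [Int.card_Icc]
      omega
    simp [this]
  have hterm : ∀ m ∈ B, (1 + ε * ((d : ℝ) * (N : ℝ) ^ 2)) ^ (-t)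
      ≤ (1 + ε * ∑ i, ((m i : ℝ)) ^ 2) ^ (-t) := by
    intro m hm
    have hQ : (0:ℝ) ≤ ∑ i, ((m i : ℝ)) ^ 2 := Finset.sum_nonneg fun i _ => sq_nonneg _
    apply Real.rpow_le_rpow_of_nonpos (by positivity) ?_ (by linarith)
    have hbd : ∀ i, ((m i : ℝ)) ^ 2 ≤ (N : ℝ) ^ 2 := by
      intro i
      have hmi := Fintype.mem_piFinset.1 hm i
      rw [Finset.mem_Icc] at hmi
      have h1 : -(N : ℝ) ≤ (m i : ℝ) := by exact_mod_cast hmi.1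
      have h2 : ((m i : ℝ)) ≤ (N : ℝ) := by exact_mod_cast hmi.2
      nlinarith
    have hsum : (∑ i, ((m i : ℝ)) ^ 2) ≤ (d : ℝ) * (N : ℝ) ^ 2 := by
      calc (∑ i, ((m i : ℝ)) ^ 2) ≤ ∑ _i : Fin d, (N : ℝ) ^ 2 :=
            Finset.sum_le_sum fun i _ => hbd i
        _ = (d : ℝ) * (N : ℝ) ^ 2 := by
            rw [Finset.sum_const, Finset.card_univ, Fintype.card_fin, nsmul_eq_mul]
    nlinarith
  have h1 : ((2 * N + 1 : ℕ) : ℝ) ^ d * (1 + ε * ((d : ℝ) * (N : ℝ) ^ 2)) ^ (-t)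
      = B.card • (1 + ε * ((d : ℝ) * (N : ℝ) ^ 2)) ^ (-t) := by
    rw [hcard, nsmul_eq_mul]
    push_cast
    ring
  rw [h1]
  calc B.card • (1 + ε * ((d : ℝ) * (N : ℝ) ^ 2)) ^ (-t)
      ≤ ∑ m ∈ B, (1 + ε * ∑ i, ((m i : ℝ)) ^ 2) ^ (-t) := Finset.card_nsmul_le_sum B _ _ hterm
    _ ≤ ∑' m : Fin d → ℤ, (1 + ε * ∑ i, ((m i : ℝ)) ^ 2) ^ (-t) :=
        Summable.sum_le_tsum B (fun m _ => Real.rpow_nonneg (by positivity) _) hs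

lemma not_summable_slice {d : ℕ} (hd : 1 ≤ d) {t : ℝ} (ht : 0 ≤ t) (htd : 2 * t ≤ d) :
    ¬ Summable fun m : Fin d → ℤ => (1 + 1 * ∑ i, ((m i : ℝ)) ^ 2) ^ (-t) := by
  classical
  intro hsum
  obtain ⟨f, hfdef⟩ : ∃ f : (Fin d → ℤ) → ℝ,
      f = fun m => (1 + 1 * ∑ i, ((m i : ℝ)) ^ 2) ^ (-t) := ⟨_, rfl⟩
  rw [← hfdef] at hsum
  have hf0 : ∀ m, 0 ≤ f m := fun m => by
    rw [hfdef]; exact Real.rpow_nonneg (by positivity) _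
  have hc : (0:ℝ) < 2 ^ d * ((1 + 4 * (d:ℝ)) ^ (-t)) := by positivity
  set c : ℝ := 2 ^ d * ((1 + 4 * (d:ℝ)) ^ (-t)) with hcdef
  set B : ℕ → Finset (Fin d → ℤ) := fun N =>
    Fintype.piFinset fun _ : Fin d => Finset.Icc (-(N : ℤ)) (N : ℤ) with hBdef
  have hBcard : ∀ N, (B N).card = (2 * N + 1) ^ d := by
    intro N
    rw [hBdef, Fintype.card_piFinset]
    have : (Finset.Icc (-(N : ℤ)) (N : ℤ)).card = 2 * N + 1 := by
      rw [Int.card_Icc]; omega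
    simp [this]
  have hmono : ∀ L : ℕ, B (2 ^ L) ⊆ B (2 ^ (L + 1)) := by
    intro L
    apply Fintype.piFinset_subset
    intro a
    have hle : (2:ℕ) ^ L ≤ 2 ^ (L + 1) :=
      Nat.pow_le_pow_right (by norm_num) (Nat.le_succ L)
    apply Finset.Icc_subset_Icc
    · omega
    · omega
  have hterm : ∀ L : ℕ, ∀ m ∈ B (2 ^ (L + 1)),
      ((1 + 4 * (d:ℝ)) ^ (-t)) * (((4:ℝ) ^ L) ^ (-t)) ≤ f m := by
    intro L m hm
    have hQ : (0:ℝ) ≤ ∑ i, ((m i : ℝ)) ^ 2 := Finset.sum_nonneg fun i _ => sq_nonneg _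
    have hbd : ∀ i, ((m i : ℝ)) ^ 2 ≤ ((2:ℝ) ^ (L + 1)) ^ 2 := by
      intro i
      have hmi := Fintype.mem_piFinset.1 hm i
      rw [Finset.mem_Icc] at hmi
      have h1 : -((2:ℝ) ^ (L + 1)) ≤ (m i : ℝ) := by
        have := hmi.1; push_cast at this ⊢; exact_mod_cast this
      have h2 : ((m i : ℝ)) ≤ (2:ℝ) ^ (L + 1) := by
        have := hmi.2; push_cast at this ⊢; exact_mod_cast this
      nlinarith
    have hsumbd : (∑ i, ((m i : ℝ)) ^ 2) ≤ (d : ℝ) * ((2:ℝ) ^ (L + 1)) ^ 2 := by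
      calc (∑ i, ((m i : ℝ)) ^ 2) ≤ ∑ _i : Fin d, ((2:ℝ) ^ (L + 1)) ^ 2 :=
            Finset.sum_le_sum fun i _ => hbd i
        _ = (d : ℝ) * ((2:ℝ) ^ (L + 1)) ^ 2 := by
            rw [Finset.sum_const, Finset.card_univ, Fintype.card_fin, nsmul_eq_mul]
    have hpow : ((2:ℝ) ^ (L + 1)) ^ 2 = 4 * (4:ℝ) ^ L := by
      rw [← pow_mul, mul_comm (L+1) 2, pow_mul]
      norm_num
      ring
    have h4L : (1:ℝ) ≤ (4:ℝ) ^ L := one_le_pow₀ (by norm_num : (1:ℝ) ≤ 4)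
    have hchain : 1 + 1 * ∑ i, ((m i : ℝ)) ^ 2 ≤ (1 + 4 * (d:ℝ)) * (4:ℝ) ^ L := by
      rw [hpow] at hsumbd
      have hd0 : (1:ℝ) ≤ d := by exact_mod_cast hd
      nlinarith
    rw [hfdef]
    have key : ((1 + 4 * (d:ℝ)) * (4:ℝ) ^ L) ^ (-t)
        ≤ (1 + 1 * ∑ i, ((m i : ℝ)) ^ 2) ^ (-t) :=
      Real.rpow_le_rpow_of_nonpos (by positivity) hchain (by linarith)
    calc ((1 + 4 * (d:ℝ)) ^ (-t)) * (((4:ℝ) ^ L) ^ (-t))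
        = ((1 + 4 * (d:ℝ)) * (4:ℝ) ^ L) ^ (-t) :=
          (Real.mul_rpow (by positivity) (by positivity)).symm
      _ ≤ _ := key
  have hcard_sdiff : ∀ L : ℕ, 2 ^ ((L + 1) * d) ≤ (B (2 ^ (L + 1)) \ B (2 ^ L)).card := by
    intro L
    rw [Finset.card_sdiff_of_subset (hmono L), hBcard, hBcard]
    have hA : 2 * 2 ^ (L + 1) + 1 = (2 * 2 ^ L + 1) + 2 ^ (L + 1) := by ring
    have hle : (2 * 2 ^ L + 1) ^ d + (2 ^ (L + 1)) ^ d ≤ (2 * 2 ^ (L + 1) + 1) ^ d := by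
      rw [hA]
      exact pow_add_pow_le (Nat.zero_le _) (Nat.zero_le _) (by omega)
    have hE : (2 ^ (L + 1)) ^ d = 2 ^ ((L + 1) * d) := by rw [← pow_mul]
    omega
  have hannulus : ∀ L : ℕ, c ≤ ∑ m ∈ B (2 ^ (L + 1)) \ B (2 ^ L), f m := by
    intro L
    have hsub : B (2 ^ (L + 1)) \ B (2 ^ L) ⊆ B (2 ^ (L + 1)) := Finset.sdiff_subset
    have hlow : ((B (2 ^ (L + 1)) \ B (2 ^ L)).card : ℝ)
        * (((1 + 4 * (d:ℝ)) ^ (-t)) * (((4:ℝ) ^ L) ^ (-t)))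
        ≤ ∑ m ∈ B (2 ^ (L + 1)) \ B (2 ^ L), f m := by
      have := Finset.card_nsmul_le_sum (B (2 ^ (L + 1)) \ B (2 ^ L)) f
        (((1 + 4 * (d:ℝ)) ^ (-t)) * (((4:ℝ) ^ L) ^ (-t)))
        (fun m hm => hterm L m (hsub hm))
      rwa [nsmul_eq_mul] at this
    have hcardR : ((2:ℝ) ^ ((L + 1) * d)) ≤ ((B (2 ^ (L + 1)) \ B (2 ^ L)).card : ℝ) := by
      exact_mod_cast hcard_sdiff L
    have hminpos : (0:ℝ) ≤ ((1 + 4 * (d:ℝ)) ^ (-t)) * (((4:ℝ) ^ L) ^ (-t)) := by positivity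
    have hstep : c ≤ ((2:ℝ) ^ ((L + 1) * d))
        * (((1 + 4 * (d:ℝ)) ^ (-t)) * (((4:ℝ) ^ L) ^ (-t))) := by
      rw [hcdef]
      have hkey : (2:ℝ) ^ d ≤ ((2:ℝ) ^ ((L + 1) * d)) * (((4:ℝ) ^ L) ^ (-t)) := by
        have e1 : ((2:ℝ) ^ ((L + 1) * d)) = (2:ℝ) ^ ((((L + 1) * d : ℕ)) : ℝ) :=
          (Real.rpow_natCast 2 ((L + 1) * d)).symm
        have e2 : ((4:ℝ) ^ L) = (2:ℝ) ^ ((2 * L : ℕ)) := by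
          rw [pow_mul]; norm_num
        have e3 : (((4:ℝ) ^ L) ^ (-t)) = (2:ℝ) ^ (((2 * L : ℕ) : ℝ) * (-t)) := by
          rw [e2, ← Real.rpow_natCast 2 (2 * L), ← Real.rpow_mul (by norm_num)]
        have e4 : ((2:ℝ) ^ ((L + 1) * d)) * (((4:ℝ) ^ L) ^ (-t))
            = (2:ℝ) ^ (((((L + 1) * d : ℕ)) : ℝ) + ((2 * L : ℕ) : ℝ) * (-t)) := by
          rw [e1, e3, ← Real.rpow_add (by norm_num)]
        rw [e4]
        have e5 : ((2:ℝ) ^ d) = (2:ℝ) ^ ((d : ℕ) : ℝ) := (Real.rpow_natCast 2 d).symm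
        rw [e5]
        apply Real.rpow_le_rpow_of_exponent_le (by norm_num)
        push_cast
        nlinarith [Nat.cast_nonneg (α := ℝ) L]
      calc (2:ℝ) ^ d * ((1 + 4 * (d:ℝ)) ^ (-t))
          ≤ (((2:ℝ) ^ ((L + 1) * d)) * (((4:ℝ) ^ L) ^ (-t))) * ((1 + 4 * (d:ℝ)) ^ (-t)) := by
            have : (0:ℝ) ≤ (1 + 4 * (d:ℝ)) ^ (-t) := by positivity
            nlinarith
        _ = ((2:ℝ) ^ ((L + 1) * d)) * (((1 + 4 * (d:ℝ)) ^ (-t)) * (((4:ℝ) ^ L) ^ (-t))) := by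
            ring
    calc c ≤ ((2:ℝ) ^ ((L + 1) * d))
          * (((1 + 4 * (d:ℝ)) ^ (-t)) * (((4:ℝ) ^ L) ^ (-t))) := hstep
      _ ≤ ((B (2 ^ (L + 1)) \ B (2 ^ L)).card : ℝ)
          * (((1 + 4 * (d:ℝ)) ^ (-t)) * (((4:ℝ) ^ L) ^ (-t))) := by nlinarith
      _ ≤ _ := hlow
  have hbox : ∀ L : ℕ, (L : ℝ) * c ≤ ∑ m ∈ B (2 ^ L), f m := by
    intro L
    induction L with
    | zero => simpa using Finset.sum_nonneg fun m _ => hf0 m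
    | succ L ih =>
      have hsd := Finset.sum_sdiff (f := f) (hmono L)
      have hann := hannulus L
      push_cast
      nlinarith
  obtain ⟨L, hL⟩ := exists_nat_gt ((∑' m, f m) / c)
  have h1 := hbox L
  have h2 : (∑ m ∈ B (2 ^ L), f m) ≤ ∑' m, f m :=
    Summable.sum_le_tsum _ (fun m _ => hf0 m) hsum
  have h3 : (∑' m, f m) < L * c := by
    rw [div_lt_iff₀ hc] at hL
    linarith
  linarith

end BesovAux

/-- For `p > 0`, `s < d/p - d/2`, `w < 0` and `k > 0`, the family `(ω_m^j(p,s,w)^k)_{(j,m)}`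
is summable iff `k > max{-d/w, 2dp/(2d - dp - 2ps)}`. -/
theorem besovWeight_pow_summable_iff_of_lt (d : ℕ) (hd : 1 ≤ d) (p s w k : ℝ)
    (hp : 0 < p) (hs : s < (d : ℝ) / p - (d : ℝ) / 2) (hw : w < 0) (hk : 0 < k) :
    Summable (fun x : ℕ × (Fin d → ℤ) => besovWeight d p s w x.1 x.2 ^ k) ↔
      max (-(d : ℝ) / w) (2 * (d : ℝ) * p / (2 * (d : ℝ) - (d : ℝ) * p - 2 * p * s)) < k := by
  classical
  have hdR : (0:ℝ) < d := by exact_mod_cast Nat.lt_of_lt_of_le Nat.zero_lt_one hd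
  obtain ⟨t, htdef⟩ : ∃ t : ℝ, t = -(w / 2 * k) := ⟨_, rfl⟩
  have ht : 0 < t := by rw [htdef]; nlinarith
  obtain ⟨γ, hγdef⟩ : ∃ γ : ℝ, γ = (s - (d:ℝ) / p + (d:ℝ) / 2) * k := ⟨_, rfl⟩
  have hγneg : γ < 0 := by
    rw [hγdef]
    exact mul_neg_of_neg_of_pos (by linarith) hk
  obtain ⟨r, hrdef⟩ : ∃ r : ℝ, r = (2:ℝ) ^ γ := ⟨_, rfl⟩
  have hr : 0 < r := hrdef ▸ Real.rpow_pos_of_pos two_pos γ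
  -- rewrite the summand
  have he4 : ∀ j : ℕ, (2:ℝ) ^ (-(2 * (j:ℝ))) = (1/4:ℝ) ^ j := by
    intro j
    rw [show -(2 * (j:ℝ)) = (-2) * (j:ℝ) by ring, Real.rpow_mul (by norm_num),
      Real.rpow_natCast]
    congr 1
    rw [show (-2:ℝ) = ((-2:ℤ):ℝ) by norm_num, Real.rpow_intCast]
    norm_num
  have hkey : ∀ (j : ℕ) (m : Fin d → ℤ), besovWeight d p s w j m ^ k
      = r ^ j * (1 + (1/4:ℝ) ^ j * ∑ i, ((m i : ℝ)) ^ 2) ^ (-t) := by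
    intro j m
    have hQ : (0:ℝ) ≤ ∑ i, ((m i : ℝ)) ^ 2 := Finset.sum_nonneg fun i _ => sq_nonneg _
    have hX : (0:ℝ) < 1 + (2:ℝ) ^ (-(2 * (j:ℝ))) * ∑ i, ((m i : ℝ)) ^ 2 := by positivity
    rw [besovWeight, Real.mul_rpow (Real.rpow_nonneg (by norm_num) _)
      (Real.rpow_nonneg hX.le _)]
    congr 1
    · rw [← Real.rpow_mul (by norm_num : (0:ℝ) ≤ 2), hrdef,
        ← Real.rpow_natCast ((2:ℝ) ^ γ) j, ← Real.rpow_mul (by norm_num : (0:ℝ) ≤ 2),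
        hγdef]
      congr 1
      ring
    · rw [← Real.rpow_mul hX.le, he4 j, htdef]
      congr 1
      ring
  obtain ⟨F, hFdef⟩ : ∃ F : ℕ × (Fin d → ℤ) → ℝ,
      F = fun x : ℕ × (Fin d → ℤ) =>
        r ^ x.1 * (1 + (1/4:ℝ) ^ x.1 * ∑ i, ((x.2 i : ℝ)) ^ 2) ^ (-t) := ⟨_, rfl⟩
  have hFeq : (fun x : ℕ × (Fin d → ℤ) => besovWeight d p s w x.1 x.2 ^ k) = F :=
    funext fun x => by rw [hFdef]; exact hkey x.1 x.2
  have hF0 : 0 ≤ F := by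
    rw [hFdef]
    intro x
    have hQ : (0:ℝ) ≤ ∑ i, ((x.2 i : ℝ)) ^ 2 := Finset.sum_nonneg fun i _ => sq_nonneg _
    positivity
  rw [hFeq, summable_prod_of_nonneg hF0, max_lt_iff]
  -- arithmetic equivalences
  have hA : (-(d:ℝ) / w < k) ↔ (d:ℝ) < 2 * t := by
    rw [div_lt_iff_of_neg hw, htdef]
    constructor <;> intro h <;> nlinarith
  have hD : (0:ℝ) < 2 * (d:ℝ) - (d:ℝ) * p - 2 * p * s := by
    have h1 : s + (d:ℝ)/2 < (d:ℝ)/p := by linarith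
    rw [lt_div_iff₀ hp] at h1
    nlinarith
  have hγ2p : 2 * p * γ = (2 * p * s - 2 * (d:ℝ) + (d:ℝ) * p) * k := by
    rw [hγdef]
    field_simp
  have hB : (2 * (d:ℝ) * p / (2 * (d:ℝ) - (d:ℝ) * p - 2 * p * s) < k) ↔ γ + (d:ℝ) < 0 := by
    rw [div_lt_iff₀ hD]
    constructor <;> intro h <;> nlinarith
  rw [hA, hB]
  -- the slice functions
  have hslice_eq : ∀ j : ℕ, (fun m : Fin d → ℤ => F (j, m))
      = fun m : Fin d → ℤ => r ^ j * (1 + (1/4:ℝ) ^ j * ∑ i, ((m i : ℝ)) ^ 2) ^ (-t) := by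
    intro j; rw [hFdef]
  constructor
  · -- necessity
    rintro ⟨h1, h2⟩
    have hslice : ∀ j : ℕ, Summable fun m : Fin d → ℤ =>
        (1 + (1/4:ℝ) ^ j * ∑ i, ((m i : ℝ)) ^ 2) ^ (-t) := by
      intro j
      have := h1 j
      rw [hslice_eq j] at this
      exact (summable_mul_left_iff (pow_ne_zero j hr.ne')).1 this
    have hdt : (d:ℝ) < 2 * t := by
      by_contra hcon
      push_neg at hcon
      apply BesovAux.not_summable_slice hd ht.le hcon
      refine (hslice 0).congr fun m => ?_
      norm_num
    refine ⟨hdt, ?_⟩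
    by_contra hcon
    push_neg at hcon
    -- the j-indexed sums don't tend to zero
    have hterm_lb : ∀ j : ℕ, ((1:ℝ) + d) ^ (-t) ≤ ∑' m : Fin d → ℤ, F (j, m) := by
      intro j
      have hbox := BesovAux.le_tsum_box ht.le (by positivity : (0:ℝ) ≤ (1/4:ℝ)^j)
        (2 ^ j) (hslice j)
      have hee : (1/4:ℝ) ^ j * ((d:ℝ) * (((2:ℕ) ^ j : ℕ) : ℝ) ^ 2) = (d:ℝ) := by
        push_cast
        rw [show (((2:ℝ)) ^ j) ^ 2 = 4 ^ j by rw [← pow_mul, mul_comm j 2, pow_mul]; norm_num]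
        rw [show (1/4:ℝ) ^ j * ((d:ℝ) * 4 ^ j) = (d:ℝ) * ((1/4 : ℝ) * 4) ^ j by
          rw [mul_pow]; ring]
        norm_num
      rw [hee] at hbox
      have hcards : (1:ℝ) ≤ ((2 * 2 ^ j + 1 : ℕ) : ℝ) ^ d := by
        have : (1:ℝ) ≤ ((2 * 2 ^ j + 1 : ℕ) : ℝ) := by
          have : (1:ℕ) ≤ 2 * 2 ^ j + 1 := by omega
          exact_mod_cast this
        exact one_le_pow₀ this
      have htsum_eq : (∑' m : Fin d → ℤ, F (j, m))
          = r ^ j * ∑' m : Fin d → ℤ, (1 + (1/4:ℝ) ^ j * ∑ i, ((m i : ℝ)) ^ 2) ^ (-t) := by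
        rw [hFdef]
        simp only []
        exact tsum_mul_left
      rw [htsum_eq]
      push_cast at hbox
      have hr2d : (1:ℝ) ≤ r * 2 ^ d := by
        have heq2 : r * 2 ^ d = (2:ℝ) ^ (γ + (d:ℝ)) := by
          rw [hrdef, Real.rpow_add two_pos, Real.rpow_natCast]
        rw [heq2, show (1:ℝ) = (2:ℝ) ^ (0:ℝ) from (Real.rpow_zero 2).symm]
        exact Real.rpow_le_rpow_of_exponent_le one_le_two hcon
      have hrj : (1:ℝ) ≤ (r * 2 ^ d) ^ j := one_le_pow₀ hr2d
      have hcpos : (0:ℝ) < (1 + (d:ℝ)) ^ (-t) := Real.rpow_pos_of_pos (by linarith) _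
      have h2d : ((2:ℝ) ^ j) ^ d ≤ (2 * (2:ℝ) ^ j + 1) ^ d := by
        apply pow_le_pow_left₀ (by positivity)
        nlinarith [pow_pos (show (0:ℝ) < 2 by norm_num) j]
      calc ((1:ℝ) + d) ^ (-t)
          ≤ (r * 2 ^ d) ^ j * ((1 + (d:ℝ)) ^ (-t)) := le_mul_of_one_le_left hcpos.le hrj
        _ = r ^ j * (((2:ℝ) ^ j) ^ d * (1 + (d:ℝ)) ^ (-t)) := by
            rw [mul_pow, ← pow_mul, ← pow_mul, mul_comm d j]
            ring
        _ ≤ r ^ j * ((2 * (2:ℝ) ^ j + 1) ^ d * (1 + (d:ℝ)) ^ (-t)) := by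
            have := mul_le_mul_of_nonneg_right h2d hcpos.le
            exact mul_le_mul_of_nonneg_left this (pow_nonneg hr.le j)
        _ ≤ r ^ j * ∑' m : Fin d → ℤ,
              (1 + (1/4:ℝ) ^ j * ∑ i, ((m i : ℝ)) ^ 2) ^ (-t) := by
            exact mul_le_mul_of_nonneg_left hbox (pow_nonneg hr.le j)
    have hcpos : (0:ℝ) < ((1:ℝ) + d) ^ (-t) := Real.rpow_pos_of_pos (by linarith) _
    have htend := h2.tendsto_atTop_zero
    have hev : ∀ᶠ j in Filter.atTop, (∑' m : Fin d → ℤ, F (j, m)) < ((1:ℝ) + d) ^ (-t) :=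
      htend.eventually (gt_mem_nhds hcpos)
    obtain ⟨j, hj⟩ := hev.exists
    exact absurd (hterm_lb j) (not_le.2 hj)
  · -- sufficiency
    rintro ⟨hdt, hγd⟩
    have hu : 1 < 2 * (t / (d:ℝ)) := by
      rw [show 2 * (t / (d:ℝ)) = 2 * t / (d:ℝ) by ring, lt_div_iff₀ hdR]
      linarith
    have hgsum : ∀ j : ℕ, Summable fun z : ℤ => (1 + (1/4:ℝ) ^ j * (z:ℝ) ^ 2) ^ (-(t/d)) :=
      fun j => BesovAux.summable_zg hu (by positivity)
    have hg0 : ∀ (j : ℕ) (z : ℤ), 0 ≤ (1 + (1/4:ℝ) ^ j * (z:ℝ) ^ 2) ^ (-(t/d)) :=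
      fun j z => Real.rpow_nonneg (by positivity) _
    have hpis := fun j : ℕ => BesovAux.pi_summable_tsum (hg0 j) (hgsum j) d
    have hcomp : ∀ (j : ℕ) (m : Fin d → ℤ),
        (1 + (1/4:ℝ) ^ j * ∑ i, ((m i : ℝ)) ^ 2) ^ (-t)
          ≤ ∏ i, (1 + (1/4:ℝ) ^ j * ((m i : ℝ)) ^ 2) ^ (-(t/d)) :=
      fun j m => BesovAux.one_add_sum_rpow_le hd ht (by positivity) m
    have hslice : ∀ j : ℕ, Summable fun m : Fin d → ℤ =>
        (1 + (1/4:ℝ) ^ j * ∑ i, ((m i : ℝ)) ^ 2) ^ (-t) := by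
      intro j
      refine Summable.of_nonneg_of_le (fun m => Real.rpow_nonneg ?_ _) (hcomp j) (hpis j).1
      have hQ : (0:ℝ) ≤ ∑ i, ((m i : ℝ)) ^ 2 := Finset.sum_nonneg fun i _ => sq_nonneg _
      positivity
    refine ⟨fun j => ?_, ?_⟩
    · rw [hslice_eq j]
      exact (hslice j).mul_left _
    · obtain ⟨P0, hP0def⟩ : ∃ P0 : ℝ, P0 = ∑' n : ℕ, (1 + 1 * (n:ℝ) ^ 2) ^ (-(t/d)) := ⟨_, rfl⟩
      have hP0 : 0 ≤ P0 := hP0def ▸ tsum_nonneg fun n => Real.rpow_nonneg (by positivity) _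
      have hq1 : r * 2 ^ d < 1 := by
        have heq2 : r * 2 ^ d = (2:ℝ) ^ (γ + (d:ℝ)) := by
          rw [hrdef, Real.rpow_add two_pos, Real.rpow_natCast]
        rw [heq2]
        exact Real.rpow_lt_one_of_one_lt_of_neg (by norm_num) (by linarith)
      have hq0 : (0:ℝ) ≤ r * 2 ^ d := by positivity
      refine Summable.of_nonneg_of_le (fun j => tsum_nonneg fun m => hF0 (j, m))
        (fun j => ?_) (((summable_geometric_of_lt_one hq0 hq1)).mul_left ((2 * P0) ^ d))
      have htsum_eq : (∑' m : Fin d → ℤ, F (j, m))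
          = r ^ j * ∑' m : Fin d → ℤ, (1 + (1/4:ℝ) ^ j * ∑ i, ((m i : ℝ)) ^ 2) ^ (-t) := by
        rw [hFdef]
        simp only []
        exact tsum_mul_left
      rw [htsum_eq]
      have hS1 : (∑' m : Fin d → ℤ, (1 + (1/4:ℝ) ^ j * ∑ i, ((m i : ℝ)) ^ 2) ^ (-t))
          ≤ (∑' z : ℤ, (1 + (1/4:ℝ) ^ j * (z:ℝ) ^ 2) ^ (-(t/d))) ^ d := by
        rw [← (hpis j).2]
        exact Summable.tsum_le_tsum (hcomp j) (hslice j) (hpis j).1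
      have hT : (∑' z : ℤ, (1 + (1/4:ℝ) ^ j * (z:ℝ) ^ 2) ^ (-(t/d))) ≤ 2 ^ (j + 1) * P0 := by
        rw [hP0def]
        exact BesovAux.tsum_zg_pow_le hu j
      have hTnn : (0:ℝ) ≤ ∑' z : ℤ, (1 + (1/4:ℝ) ^ j * (z:ℝ) ^ 2) ^ (-(t/d)) :=
        tsum_nonneg fun z => hg0 j z
      have hS2 : (∑' z : ℤ, (1 + (1/4:ℝ) ^ j * (z:ℝ) ^ 2) ^ (-(t/d))) ^ d
          ≤ (2 ^ (j + 1) * P0) ^ d := pow_le_pow_left₀ hTnn hT d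
      have hfinal : r ^ j * ((2:ℝ) ^ (j + 1) * P0) ^ d = (2 * P0) ^ d * (r * 2 ^ d) ^ j := by
        rw [mul_pow ((2:ℝ) ^ (j + 1)) P0 d, ← pow_mul, mul_pow r ((2:ℝ) ^ d) j,
          ← pow_mul, mul_pow (2:ℝ) P0 d, show (j + 1) * d = d * j + d by ring, pow_add]
        ring
      calc r ^ j * (∑' m : Fin d → ℤ, (1 + (1/4:ℝ) ^ j * ∑ i, ((m i : ℝ)) ^ 2) ^ (-t))
          ≤ r ^ j * ((2:ℝ) ^ (j + 1) * P0) ^ d := by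
            have := hS1.trans hS2
            exact mul_le_mul_of_nonneg_left this (pow_nonneg hr.le j)
        _ = (2 * P0) ^ d * (r * 2 ^ d) ^ j := hfinal
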